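/- Let F: P(n+m) → ℚ be a function on partitions of n+m, let σ be a partition of n, and define for partitions τ of m: G_σ(τ) = ∑_{P ⊢ I(σ)⊔I(τ)} F((σ⊔τ)^P) and G'_σ(τ) = ∑_{P ⊢ I(σ)⊔I(τ), P separates I(τ)} F((σ⊔τ)^P), where (σ⊔τ)^P is the partition whose parts are the sums of parts of σ⊔τ over each block of P. Then G_σ(τ) = ∑_{P ⊢ I(τ)} G'_σ(τ^P). -/

import Mathlib

open Finset

open scoped Classical

namespace SepAux

variable {a b : ℕ}

/-- Two finpartitions of a finset agreeing on `part` are equal. -/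
theorem part_ext {γ : Type*} [DecidableEq γ] {s : Finset γ} {P P' : Finpartition s}
    (h : ∀ x, P.part x = P'.part x) : P = P' := by
  have key : ∀ (P : Finpartition s), P.parts = s.image P.part := by
    intro P
    ext p
    constructor
    · intro hp
      obtain ⟨x, hx, hxp⟩ := P.part_surjOn hp
      exact mem_image.2 ⟨x, hx, hxp⟩
    · intro hp
      obtain ⟨x, hx, rfl⟩ := mem_image.1 hp
      exact P.part_mem.2 hx
  apply Finpartition.ext
  rw [key P, key P']
  ext p
  simp only [mem_image]
  constructor <;> rintro ⟨x, hx, rfl⟩ <;> exact ⟨x, hx, by rw [h]⟩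

theorem ofSetoid_part_eq_iff {γ : Type*} [Fintype γ] [DecidableEq γ] (s : Setoid γ)
    [DecidableRel s.r] (x y : γ) :
    (Finpartition.ofSetoid s).part x = (Finpartition.ofSetoid s).part y ↔ s.r x y := by
  constructor
  · intro h
    have hx : x ∈ (Finpartition.ofSetoid s).part y :=
      h ▸ (Finpartition.ofSetoid s).mem_part (mem_univ x)
    exact s.symm (Finpartition.mem_part_ofSetoid_iff_rel.1 hx)
  · intro h
    have hx : x ∈ (Finpartition.ofSetoid s).part y :=
      Finpartition.mem_part_ofSetoid_iff_rel.2 (s.symm h)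
    exact (Finpartition.ofSetoid s).part_eq_of_mem
      ((Finpartition.ofSetoid s).part_mem.2 (mem_univ y)) hx

theorem ofSetoid_eq_of_rel_iff {γ : Type*} [Fintype γ] [DecidableEq γ] (s : Setoid γ)
    [DecidableRel s.r] (P : Finpartition (univ : Finset γ))
    (h : ∀ x y, s.r x y ↔ P.part x = P.part y) :
    Finpartition.ofSetoid s = P := by
  apply part_ext
  intro x
  ext y
  rw [Finpartition.mem_part_ofSetoid_iff_rel, h]
  rw [P.mem_part_iff_part_eq_part (mem_univ y) (mem_univ x)]
  exact ⟨Eq.symm, Eq.symm⟩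

variable (a b)

abbrev A := Fin a ⊕ Fin b

abbrev B (P : Finpartition (univ : Finset (Fin b))) :=
  Fin a ⊕ {s : Finset (Fin b) // s ∈ P.parts}

variable {a b}

def rep (P : Finpartition (univ : Finset (Fin b))) : B a b P → A a b
  | .inl i => .inl i
  | .inr p => .inr (p.1.min' (P.nonempty_of_mem_parts p.2))

def pi (P : Finpartition (univ : Finset (Fin b))) : A a b → B a b P
  | .inl i => .inl i
  | .inr j => .inr ⟨P.part j, P.part_mem.2 (mem_univ j)⟩

theorem pi_rep (P : Finpartition (univ : Finset (Fin b))) (x : B a b P) :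
    pi P (rep P x) = x := by
  cases x with
  | inl i => rfl
  | inr p =>
    simp only [rep, pi]
    congr 1
    exact Subtype.ext (P.part_eq_of_mem p.2 (p.1.min'_mem _))

def sbSetoid (R : Finpartition (univ : Finset (A a b))) : Setoid (Fin b) :=
  ⟨fun i j => R.part (.inr i) = R.part (.inr j), ⟨fun _ => rfl, Eq.symm, Eq.trans⟩⟩

noncomputable def PofR (R : Finpartition (univ : Finset (A a b))) : Finpartition (univ : Finset (Fin b)) :=
  Finpartition.ofSetoid (sbSetoid R)

def sqSetoid (P : Finpartition (univ : Finset (Fin b)))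
    (R : Finpartition (univ : Finset (A a b))) : Setoid (B a b P) :=
  ⟨fun x y => R.part (rep P x) = R.part (rep P y), ⟨fun _ => rfl, Eq.symm, Eq.trans⟩⟩

noncomputable def QofR (P : Finpartition (univ : Finset (Fin b)))
    (R : Finpartition (univ : Finset (A a b))) : Finpartition (univ : Finset (B a b P)) :=
  Finpartition.ofSetoid (sqSetoid P R)

def saSetoid (P : Finpartition (univ : Finset (Fin b)))
    (Q : Finpartition (univ : Finset (B a b P))) : Setoid (A a b) :=
  ⟨fun x y => Q.part (pi P x) = Q.part (pi P y), ⟨fun _ => rfl, Eq.symm, Eq.trans⟩⟩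

noncomputable def RofPQ (P : Finpartition (univ : Finset (Fin b)))
    (Q : Finpartition (univ : Finset (B a b P))) : Finpartition (univ : Finset (A a b)) :=
  Finpartition.ofSetoid (saSetoid P Q)

/-- separation predicate -/
def Sep (P : Finpartition (univ : Finset (Fin b)))
    (Q : Finpartition (univ : Finset (B a b P))) : Prop :=
  ∀ q ∈ Q.parts, ∀ p p' : {s : Finset (Fin b) // s ∈ P.parts},
    Sum.inr p ∈ q → Sum.inr p' ∈ q → p = p'

theorem PofR_part_eq_iff (R : Finpartition (univ : Finset (A a b))) (i j : Fin b) :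
    (PofR (a := a) R).part i = (PofR R).part j ↔
      R.part (.inr i) = R.part (.inr j) :=
  ofSetoid_part_eq_iff _ _ _

/-- key: R.part (rep (pi x)) = R.part x  when PofR R = P -/
theorem part_rep_pi {R : Finpartition (univ : Finset (A a b))}
    {P : Finpartition (univ : Finset (Fin b))} (h : PofR R = P) (x : A a b) :
    R.part (rep P (pi P x)) = R.part x := by
  cases x with
  | inl i => rfl
  | inr j =>
    subst h
    simp only [pi, rep]
    have hmem : ((PofR R).part j).min'
        ((PofR R).nonempty_of_mem_parts ((PofR R).part_mem.2 (mem_univ j))) ∈ (PofR R).part j :=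
      min'_mem _ _
    unfold PofR at hmem
    have hrel : sbSetoid (a := a) R j _ := Finpartition.mem_part_ofSetoid_iff_rel.1 hmem
    exact hrel.symm

theorem sep_QofR {R : Finpartition (univ : Finset (A a b))}
    {P : Finpartition (univ : Finset (Fin b))} (h : PofR R = P) :
    Sep P (QofR P R) := by
  subst h
  intro q hq p p' hp hp'
  obtain ⟨z, hz, rfl⟩ := (QofR (PofR R) R).part_surjOn hq
  unfold QofR at hp hp'
  rw [Finpartition.mem_part_ofSetoid_iff_rel] at hp hp'
  have hpp' : R.part (rep (PofR R) (.inr p)) = R.part (rep (PofR R) (.inr p')) :=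
    hp.symm.trans hp'
  simp only [rep] at hpp'
  apply Subtype.ext
  rw [← (PofR R).part_eq_of_mem p.2 (min'_mem _ ((PofR R).nonempty_of_mem_parts p.2)),
      ← (PofR R).part_eq_of_mem p'.2 (min'_mem _ ((PofR R).nonempty_of_mem_parts p'.2))]
  exact (PofR_part_eq_iff R _ _).2 hpp'

theorem RofPQ_QofR {R : Finpartition (univ : Finset (A a b))}
    {P : Finpartition (univ : Finset (Fin b))} (h : PofR R = P) :
    RofPQ P (QofR P R) = R := by
  apply ofSetoid_eq_of_rel_iff
  intro x y
  show (QofR P R).part (pi P x) = (QofR P R).part (pi P y) ↔ _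
  unfold QofR
  rw [ofSetoid_part_eq_iff]
  show R.part (rep P (pi P x)) = R.part (rep P (pi P y)) ↔ _
  rw [part_rep_pi h, part_rep_pi h]

theorem QofR_RofPQ (P : Finpartition (univ : Finset (Fin b)))
    (Q : Finpartition (univ : Finset (B a b P))) :
    QofR P (RofPQ P Q) = Q := by
  apply ofSetoid_eq_of_rel_iff
  intro x y
  show (RofPQ P Q).part (rep P x) = (RofPQ P Q).part (rep P y) ↔ _
  unfold RofPQ
  rw [ofSetoid_part_eq_iff]
  show Q.part (pi P (rep P x)) = Q.part (pi P (rep P y)) ↔ _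
  rw [pi_rep, pi_rep]

theorem PofR_RofPQ {P : Finpartition (univ : Finset (Fin b))}
    {Q : Finpartition (univ : Finset (B a b P))} (hsep : Sep P Q) :
    PofR (RofPQ P Q) = P := by
  apply ofSetoid_eq_of_rel_iff
  intro i j
  show (RofPQ P Q).part (.inr i) = (RofPQ P Q).part (.inr j) ↔ _
  unfold RofPQ
  rw [ofSetoid_part_eq_iff]
  show Q.part (pi P (.inr i)) = Q.part (pi P (.inr j)) ↔ _
  simp only [pi]
  constructor
  · intro hq
    have h1 : (Sum.inr ⟨P.part i, P.part_mem.2 (mem_univ i)⟩ : B a b P) ∈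
        Q.part (Sum.inr ⟨P.part i, P.part_mem.2 (mem_univ i)⟩) := Q.mem_part (mem_univ _)
    have h2 : (Sum.inr ⟨P.part j, P.part_mem.2 (mem_univ j)⟩ : B a b P) ∈
        Q.part (Sum.inr ⟨P.part i, P.part_mem.2 (mem_univ i)⟩) := by
      rw [hq]; exact Q.mem_part (mem_univ _)
    have := hsep _ (Q.part_mem.2 (mem_univ _)) _ _ h1 h2
    exact congrArg Subtype.val this
  · intro hp
    congr 2
    exact Subtype.ext hp

def expand (P : Finpartition (univ : Finset (Fin b))) : B a b P → Finset (A a b)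
  | .inl i => {.inl i}
  | .inr p => p.1.image Sum.inr

theorem disjoint_expand (P : Finpartition (univ : Finset (Fin b))) :
    ∀ x y : B a b P, x ≠ y → Disjoint (expand P x) (expand P y) := by
  rintro (i | p) (j | p') hne <;> rw [Finset.disjoint_left] <;> intro x hx hy <;>
    simp only [expand, mem_singleton, mem_image] at hx hy
  · exact hne (by rw [hx] at hy; exact congrArg Sum.inl (Sum.inl.inj hy).symm ▸ rfl)
  · obtain ⟨k, _, hk⟩ := hy; rw [hx] at hk; exact nomatch hk
  · obtain ⟨k, _, hk⟩ := hx; rw [hy] at hk; exact nomatch hk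
  · obtain ⟨k, hk1, hk2⟩ := hx
    obtain ⟨k', hk'1, hk'2⟩ := hy
    have hkk : k = k' := Sum.inr.inj (hk2.trans hk'2.symm)
    subst hkk
    have hdisj : Disjoint p.1 p'.1 :=
      P.disjoint p.2 p'.2 (fun h => hne (congrArg Sum.inr (Subtype.ext h)))
    exact Finset.disjoint_left.1 hdisj hk1 hk'1

noncomputable def EP (P : Finpartition (univ : Finset (Fin b))) (q : Finset (B a b P)) :
    Finset (A a b) := q.biUnion (expand P)

theorem sum_expand (P : Finpartition (univ : Finset (Fin b))) (σ : Fin a → ℕ) (τ : Fin b → ℕ)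
    (y : B a b P) :
    ∑ x ∈ expand P y, Sum.elim σ τ x = Sum.elim σ (fun p => ∑ i ∈ p.1, τ i) y := by
  cases y with
  | inl i => simp [expand]
  | inr p =>
    simp only [expand, Sum.elim_inr]
    rw [Finset.sum_image (fun _ _ _ _ h => Sum.inr.inj h)]
    simp

theorem sum_EP (P : Finpartition (univ : Finset (Fin b))) (σ : Fin a → ℕ) (τ : Fin b → ℕ)
    (q : Finset (B a b P)) :
    ∑ x ∈ EP P q, Sum.elim σ τ x = ∑ y ∈ q, Sum.elim σ (fun p => ∑ i ∈ p.1, τ i) y := by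
  rw [EP, Finset.sum_biUnion]
  · exact Finset.sum_congr rfl fun y _ => sum_expand P σ τ y
  · exact fun x _ y _ hne => disjoint_expand P x y hne

theorem part_inr_eq_of_mem_parts {R : Finpartition (univ : Finset (A a b))}
    {P : Finpartition (univ : Finset (Fin b))} (h : PofR R = P) {p : Finset (Fin b)}
    (hp : p ∈ P.parts) {i j : Fin b} (hi : i ∈ p) (hj : j ∈ p) :
    R.part (.inr i) = R.part (.inr j) := by
  subst h
  rw [← PofR_part_eq_iff, (PofR R).part_eq_of_mem hp hi, (PofR R).part_eq_of_mem hp hj]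

theorem mem_expand_pi {P : Finpartition (univ : Finset (Fin b))} (x : A a b) :
    x ∈ expand P (pi P x) := by
  cases x with
  | inl i => simp [expand, pi]
  | inr j => exact mem_image.2 ⟨j, P.mem_part (mem_univ j), rfl⟩

theorem part_eq_of_mem_expand {R : Finpartition (univ : Finset (A a b))}
    {P : Finpartition (univ : Finset (Fin b))} (h : PofR R = P) {x : A a b} {y : B a b P}
    (hx : x ∈ expand P y) : R.part x = R.part (rep P y) := by
  cases y with
  | inl i =>
    simp only [expand, mem_singleton] at hx
    subst hx; rfl
  | inr p =>
    obtain ⟨j, hj, rfl⟩ := mem_image.1 hx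
    exact part_inr_eq_of_mem_parts h p.2 hj (min'_mem _ _)

theorem EP_part {R : Finpartition (univ : Finset (A a b))}
    {P : Finpartition (univ : Finset (Fin b))} (h : PofR R = P) (z : B a b P) :
    EP P ((QofR P R).part z) = R.part (rep P z) := by
  ext x
  simp only [EP, mem_biUnion]
  constructor
  · rintro ⟨y, hy, hxy⟩
    unfold QofR at hy
    rw [Finpartition.mem_part_ofSetoid_iff_rel] at hy
    have h1 : R.part x = R.part (rep P y) := part_eq_of_mem_expand h hxy
    have h2 : R.part (rep P z) = R.part (rep P y) := hy
    rw [R.mem_part_iff_part_eq_part (mem_univ x) (mem_univ (rep P z))]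
    rw [h1, h2]
  · intro hx
    refine ⟨pi P x, ?_, mem_expand_pi x⟩
    unfold QofR
    rw [Finpartition.mem_part_ofSetoid_iff_rel]
    show R.part (rep P z) = R.part (rep P (pi P x))
    rw [part_rep_pi h]
    exact ((R.mem_part_iff_part_eq_part (mem_univ x) (mem_univ (rep P z))).1 hx).symm

theorem parts_image {R : Finpartition (univ : Finset (A a b))}
    {P : Finpartition (univ : Finset (Fin b))} (h : PofR R = P) :
    R.parts = ((QofR P R).parts).image (EP P) := by
  ext p
  constructor
  · intro hp
    obtain ⟨x, _, rfl⟩ := R.part_surjOn hp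
    refine mem_image.2 ⟨(QofR P R).part (pi P x), (QofR P R).part_mem.2 (mem_univ _), ?_⟩
    rw [EP_part h, part_rep_pi h]
  · intro hp
    obtain ⟨q, hq, rfl⟩ := mem_image.1 hp
    obtain ⟨z, _, rfl⟩ := (QofR P R).part_surjOn hq
    rw [EP_part h]
    exact R.part_mem.2 (mem_univ _)

theorem EP_injOn {R : Finpartition (univ : Finset (A a b))}
    {P : Finpartition (univ : Finset (Fin b))} (h : PofR R = P) :
    Set.InjOn (EP P) ((QofR P R).parts : Set (Finset (B a b P))) := by
  intro q hq q' hq' heq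
  obtain ⟨z, _, rfl⟩ := (QofR P R).part_surjOn hq
  obtain ⟨z', _, rfl⟩ := (QofR P R).part_surjOn hq'
  rw [EP_part h, EP_part h] at heq
  unfold QofR
  rw [ofSetoid_part_eq_iff]
  exact heq

theorem map_parts_eq {R : Finpartition (univ : Finset (A a b))}
    {P : Finpartition (univ : Finset (Fin b))} (σ : Fin a → ℕ) (τ : Fin b → ℕ)
    (h : PofR R = P) :
    R.parts.val.map (fun s => ∑ x ∈ s, Sum.elim σ τ x) =
      (QofR P R).parts.val.map
        (fun s => ∑ x ∈ s, Sum.elim σ (fun p => ∑ i ∈ p.1, τ i) x) := by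
  rw [parts_image h, Finset.image_val_of_injOn (EP_injOn h), Multiset.map_map]
  exact Multiset.map_congr rfl fun q _ => sum_EP P σ τ q

theorem fiber_eq (σ : Fin a → ℕ) (τ : Fin b → ℕ) (F : Multiset ℕ → ℚ)
    (P : Finpartition (univ : Finset (Fin b))) :
    ∑ R ∈ univ.filter (fun R : Finpartition (univ : Finset (A a b)) => PofR R = P),
        F (R.parts.val.map (fun s => ∑ x ∈ s, Sum.elim σ τ x)) =
      ∑ Q ∈ univ.filter (fun Q : Finpartition (univ : Finset (B a b P)) =>
          ∀ q ∈ Q.parts, ∀ p p' : {s : Finset (Fin b) // s ∈ P.parts},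
            Sum.inr p ∈ q → Sum.inr p' ∈ q → p = p'),
        F (Q.parts.val.map (fun s => ∑ x ∈ s, Sum.elim σ (fun p => ∑ i ∈ p.1, τ i) x)) := by
  refine Finset.sum_bij' (fun R _ => QofR P R) (fun Q _ => RofPQ P Q) ?_ ?_ ?_ ?_ ?_
  · intro R hR
    rw [mem_filter] at hR ⊢
    exact ⟨mem_univ _, sep_QofR hR.2⟩
  · intro Q hQ
    rw [mem_filter] at hQ ⊢
    exact ⟨mem_univ _, PofR_RofPQ hQ.2⟩
  · intro R hR
    exact RofPQ_QofR (mem_filter.1 hR).2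
  · intro Q hQ
    exact QofR_RofPQ P Q
  · intro R hR
    exact congrArg F (map_parts_eq σ τ (mem_filter.1 hR).2)

end SepAux

open scoped Classical in
/-- Let `F` be a function on partitions of `n + m` (represented as
multisets of natural numbers), `σ` a partition of `n` indexed by `Fin a` and `τ` a
partition of `m` indexed by `Fin b`.  With
`G_σ(τ) = ∑_{P ⊢ I(σ)⊔I(τ)} F((σ⊔τ)^P)` and
`G'_σ(ρ) = ∑_{Q ⊢ I(σ)⊔I(ρ), Q separates I(ρ)} F((σ⊔ρ)^Q)`,
one has `G_σ(τ) = ∑_{P ⊢ I(τ)} G'_σ(τ^P)`  (on the right, `τ^P` is indexed by the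
blocks of `P`, its part at a block being the sum of the parts of `τ` over the block). -/
theorem sum_over_partitions_separating (n m a b : ℕ) (σ : Fin a → ℕ) (τ : Fin b → ℕ)
    (hσpos : ∀ i, 0 < σ i) (hτpos : ∀ i, 0 < τ i)
    (hσ : ∑ i, σ i = n) (hτ : ∑ i, τ i = m)
    (F : Multiset ℕ → ℚ) :
    (∑ P : Finpartition (Finset.univ : Finset (Fin a ⊕ Fin b)),
        F (P.parts.val.map (fun s => ∑ x ∈ s, Sum.elim σ τ x))) =
      ∑ P : Finpartition (Finset.univ : Finset (Fin b)),
        ∑ Q : Finpartition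
            (Finset.univ : Finset (Fin a ⊕ {s : Finset (Fin b) // s ∈ P.parts})),
          if ∀ q ∈ Q.parts, ∀ p p' : {s : Finset (Fin b) // s ∈ P.parts},
              Sum.inr p ∈ q → Sum.inr p' ∈ q → p = p'
          then F (Q.parts.val.map
              (fun s => ∑ x ∈ s, Sum.elim σ (fun p => ∑ i ∈ p.1, τ i) x))
          else 0 := by
  classical
  rw [← Finset.sum_fiberwise_of_maps_to (g := SepAux.PofR)
    (fun R (_ : R ∈ (univ : Finset (Finpartition (univ : Finset (Fin a ⊕ Fin b))))) =>
      mem_univ (SepAux.PofR R))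
    (fun R => F (R.parts.val.map (fun s => ∑ x ∈ s, Sum.elim σ τ x)))]
  refine Finset.sum_congr rfl fun P _ => ?_
  rw [← Finset.sum_filter]
  exact SepAux.fiber_eq σ τ F P
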